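/- Let S be a finite nonempty type, A a finite nonempty type, and T : S → A → S → ℝ with T s a s' ≥ 0 and ∑_{s'} T s a s' = 1 for all s, a (a finite MDP), and let B ⊆ S. Let G be the monotone operator on functions S → [0,1] defined by (G y) s = 1 if s ∈ B and (G y) s = max_{a ∈ A} ∑_{s'} T s a s' * y s' otherwise, and let y* be its least fixed point. Then there exists a deterministic policy π : S → A such that the least fixed point of the induced-chain reachability operator F_π, defined by (F_π x) s = 1 if s ∈ B and (F_π x) s = ∑_{s'} T s (π s) s' * x s' otherwise, equals y* pointwise (the maximal reachability probabilities of an MDP are attained simultaneously at all states by a single memoryless deterministic policy). -/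

import Mathlib

open Finset Filter Topology

namespace MDPAux

variable {S A : Type*} [Fintype S] [Nonempty S] [Fintype A] [Nonempty A]

section

variable (T : S → A → S → ℝ) (B : Set S) [DecidablePred (· ∈ B)]

/-- one-step expected value of action `a` at state `s` -/
noncomputable def qval (y : S → ℝ) (s : S) (a : A) : ℝ := ∑ s', T s a s' * y s'

/-- optimal one-step value -/
noncomputable def sup2 (y : S → ℝ) (s : S) : ℝ :=
  Finset.univ.sup' Finset.univ_nonempty (qval T y s)

/-- discounted Bellman operator -/
noncomputable def Gop (θ : ℝ) (y : S → ℝ) : S → ℝ := fun s =>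
  if s ∈ B then 1 else θ * sup2 T y s

/-- value iteration -/
noncomputable def iter (θ : ℝ) : ℕ → S → ℝ
  | 0 => fun _ => 0
  | n + 1 => Gop T B θ (iter θ n)

/-- discounted value -/
noncomputable def yth (θ : ℝ) : S → ℝ := fun s => ⨆ n, iter T B θ n s

variable {T} {B}

lemma bddabove_of_le_one {u : ℕ → ℝ} (h : ∀ n, u n ≤ 1) : BddAbove (Set.range u) :=
  ⟨1, by rintro _ ⟨n, rfl⟩; exact h n⟩

variable (hT0 : ∀ s a s', 0 ≤ T s a s') (hT1 : ∀ s a, ∑ s', T s a s' = 1)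

section
include hT0

lemma qval_mono {y z : S → ℝ} (h : ∀ s, y s ≤ z s) (s : S) (a : A) :
    qval T y s a ≤ qval T z s a :=
  Finset.sum_le_sum fun s' _ => mul_le_mul_of_nonneg_left (h s') (hT0 s a s')

lemma qval_nonneg {y : S → ℝ} (hy : ∀ s, 0 ≤ y s) (s : S) (a : A) :
    0 ≤ qval T y s a :=
  Finset.sum_nonneg fun s' _ => mul_nonneg (hT0 s a s') (hy s')

include hT1

lemma qval_le_one {y : S → ℝ} (hy : ∀ s, y s ≤ 1) (s : S) (a : A) :
    qval T y s a ≤ 1 := by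
  calc qval T y s a ≤ ∑ s', T s a s' * 1 :=
        Finset.sum_le_sum fun s' _ => mul_le_mul_of_nonneg_left (hy s') (hT0 s a s')
    _ = 1 := by simpa using hT1 s a

end

section
include hT0

lemma sup2_mono {y z : S → ℝ} (h : ∀ s, y s ≤ z s) (s : S) :
    sup2 T y s ≤ sup2 T z s :=
  Finset.sup'_le _ _ fun a _ => (qval_mono hT0 h s a).trans (Finset.le_sup' _ (mem_univ a))

lemma sup2_nonneg {y : S → ℝ} (hy : ∀ s, 0 ≤ y s) (s : S) : 0 ≤ sup2 T y s :=
  (qval_nonneg hT0 hy s (Classical.arbitrary A)).trans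
    (Finset.le_sup' _ (mem_univ (Classical.arbitrary A)))

include hT1

lemma sup2_le_one {y : S → ℝ} (hy : ∀ s, y s ≤ 1) (s : S) : sup2 T y s ≤ 1 :=
  Finset.sup'_le _ _ fun a _ => qval_le_one hT0 hT1 hy s a

end

section
include hT0

lemma Gop_mono {θ : ℝ} (hθ0 : 0 ≤ θ) {y z : S → ℝ} (h : ∀ s, y s ≤ z s) (s : S) :
    Gop T B θ y s ≤ Gop T B θ z s := by
  unfold Gop
  split
  · exact le_refl 1
  · exact mul_le_mul_of_nonneg_left (sup2_mono hT0 h s) hθ0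

lemma Gop_mono_theta {θ θ' : ℝ} (hθθ' : θ ≤ θ') {y : S → ℝ} (hy : ∀ s, 0 ≤ y s) (s : S) :
    Gop T B θ y s ≤ Gop T B θ' y s := by
  unfold Gop
  split
  · exact le_refl 1
  · exact mul_le_mul_of_nonneg_right hθθ' (sup2_nonneg hT0 hy s)

lemma Gop_nonneg {θ : ℝ} (hθ0 : 0 ≤ θ) {y : S → ℝ} (hy : ∀ s, 0 ≤ y s) (s : S) :
    0 ≤ Gop T B θ y s := by
  unfold Gop
  split
  · exact zero_le_one
  · exact mul_nonneg hθ0 (sup2_nonneg hT0 hy s)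

include hT1

lemma Gop_le_one {θ : ℝ} (hθ0 : 0 ≤ θ) (hθ1 : θ ≤ 1) {y : S → ℝ} (hy : ∀ s, y s ≤ 1)
    (s : S) : Gop T B θ y s ≤ 1 := by
  unfold Gop
  split
  · exact le_refl 1
  · calc θ * sup2 T y s ≤ θ * 1 :=
        mul_le_mul_of_nonneg_left (sup2_le_one hT0 hT1 hy s) hθ0
      _ ≤ 1 := by simpa using hθ1

end

section
include hT0 hT1

variable {θ : ℝ}

lemma iter_nonneg (hθ0 : 0 ≤ θ) (n : ℕ) : ∀ s, 0 ≤ iter T B θ n s := by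
  induction n with
  | zero => intro s; exact le_rfl
  | succ n ih => intro s; exact Gop_nonneg hT0 hθ0 ih s

lemma iter_le_one (hθ0 : 0 ≤ θ) (hθ1 : θ ≤ 1) (n : ℕ) : ∀ s, iter T B θ n s ≤ 1 := by
  induction n with
  | zero => intro s; exact zero_le_one
  | succ n ih => intro s; exact Gop_le_one hT0 hT1 hθ0 hθ1 ih s

lemma iter_succ_le (hθ0 : 0 ≤ θ) (n : ℕ) : ∀ s, iter T B θ n s ≤ iter T B θ (n + 1) s := by
  induction n with
  | zero => intro s; exact Gop_nonneg hT0 hθ0 (fun _ => le_rfl) s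
  | succ n ih => intro s; exact Gop_mono hT0 hθ0 ih s

lemma iter_mono_n (hθ0 : 0 ≤ θ) (s : S) : Monotone fun n => iter T B θ n s :=
  monotone_nat_of_le_succ fun n => iter_succ_le hT0 hT1 hθ0 n s

lemma iter_mono_theta {θ' : ℝ} (hθ0 : 0 ≤ θ) (hθθ' : θ ≤ θ') (n : ℕ) :
    ∀ s, iter T B θ n s ≤ iter T B θ' n s := by
  induction n with
  | zero => intro s; exact le_rfl
  | succ n ih =>
      intro s
      exact (Gop_mono hT0 hθ0 ih s).trans
        (Gop_mono_theta hT0 hθθ' (iter_nonneg hT0 hT1 (hθ0.trans hθθ') n) s)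

lemma bdd_iter (hθ0 : 0 ≤ θ) (hθ1 : θ ≤ 1) (s : S) :
    BddAbove (Set.range fun n => iter T B θ n s) :=
  bddabove_of_le_one fun n => iter_le_one hT0 hT1 hθ0 hθ1 n s

lemma yth_nonneg (hθ0 : 0 ≤ θ) (hθ1 : θ ≤ 1) (s : S) : 0 ≤ yth T B θ s :=
  le_ciSup (bdd_iter hT0 hT1 hθ0 hθ1 s) 0

lemma yth_le_one (hθ0 : 0 ≤ θ) (hθ1 : θ ≤ 1) (s : S) : yth T B θ s ≤ 1 :=
  ciSup_le fun n => iter_le_one hT0 hT1 hθ0 hθ1 n s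

lemma yth_mono_theta {θ' : ℝ} (hθ0 : 0 ≤ θ) (hθθ' : θ ≤ θ') (hθ'1 : θ' ≤ 1) (s : S) :
    yth T B θ s ≤ yth T B θ' s :=
  ciSup_mono (bdd_iter hT0 hT1 (hθ0.trans hθθ') hθ'1 s)
    fun n => iter_mono_theta hT0 hT1 hθ0 hθθ' n s

lemma ciSup_qval {w : ℕ → S → ℝ} (hm : ∀ s, Monotone fun n => w n s)
    (h1 : ∀ n s, w n s ≤ 1) (s : S) (a : A) :
    ⨆ n, qval T (w n) s a = qval T (fun s' => ⨆ n, w n s') s a := by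
  have hb : ∀ s', BddAbove (Set.range fun n => w n s') := fun s' =>
    bddabove_of_le_one fun n => h1 n s'
  have h1' : ∀ s', Tendsto (fun n => w n s') atTop (𝓝 (⨆ n, w n s')) := fun s' =>
    tendsto_atTop_ciSup (hm s') (hb s')
  have h2 : Tendsto (fun n => qval T (w n) s a)
      atTop (𝓝 (qval T (fun s' => ⨆ n, w n s') s a)) := by
    unfold qval
    exact tendsto_finset_sum _ fun s' _ => (h1' s').const_mul _
  have h3 : Monotone fun n => qval T (w n) s a := fun n m hnm =>
    qval_mono hT0 (fun s' => hm s' hnm) s a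
  have h4 : Tendsto (fun n => qval T (w n) s a)
      atTop (𝓝 (⨆ n, qval T (w n) s a)) :=
    tendsto_atTop_ciSup h3 (bddabove_of_le_one fun n => qval_le_one hT0 hT1 (h1 n) s a)
  exact tendsto_nhds_unique h4 h2

lemma ciSup_sup2 {w : ℕ → S → ℝ} (hm : ∀ s, Monotone fun n => w n s)
    (h1 : ∀ n s, w n s ≤ 1) (s : S) :
    ⨆ n, sup2 T (w n) s = sup2 T (fun s' => ⨆ n, w n s') s := by
  have hb : ∀ s', BddAbove (Set.range fun n => w n s') := fun s' =>
    bddabove_of_le_one fun n => h1 n s'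
  refine le_antisymm (ciSup_le fun n => Finset.sup'_le _ _ fun a _ => ?_)
    (Finset.sup'_le _ _ fun a _ => ?_)
  · refine le_trans (qval_mono hT0 (fun s' => le_ciSup (hb s') n) s a) ?_
    exact Finset.le_sup' _ (mem_univ a)
  · rw [← ciSup_qval hT0 hT1 hm h1 s a]
    refine ciSup_le fun n => ?_
    refine le_trans (Finset.le_sup' (qval T (w n) s) (mem_univ a)) ?_
    exact le_ciSup (bddabove_of_le_one fun m => sup2_le_one hT0 hT1 (h1 m) s) n

end

lemma ciSup_const_mul {θ : ℝ} (hθ0 : 0 ≤ θ) {u : ℕ → ℝ} (hm : Monotone u)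
    (h1 : ∀ n, u n ≤ 1) : ⨆ n, θ * u n = θ * ⨆ n, u n := by
  have h2 : Tendsto (fun n => θ * u n) atTop (𝓝 (θ * ⨆ n, u n)) :=
    (tendsto_atTop_ciSup hm (bddabove_of_le_one h1)).const_mul θ
  have h3 : Monotone fun n => θ * u n := fun n m h => mul_le_mul_of_nonneg_left (hm h) hθ0
  have h4 : Tendsto (fun n => θ * u n) atTop (𝓝 (⨆ n, θ * u n)) :=
    tendsto_atTop_ciSup h3 (by
      refine ⟨θ, ?_⟩
      rintro _ ⟨n, rfl⟩
      simpa using mul_le_mul_of_nonneg_left (h1 n) hθ0)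
  exact tendsto_nhds_unique h4 h2

section
include hT0 hT1

lemma yth_fix {θ : ℝ} (hθ0 : 0 ≤ θ) (hθ1 : θ ≤ 1) (s : S) :
    yth T B θ s = if s ∈ B then 1 else θ * sup2 T (yth T B θ) s := by
  by_cases hs : s ∈ B
  · rw [if_pos hs]
    refine le_antisymm (yth_le_one hT0 hT1 hθ0 hθ1 s) ?_
    have h1 : iter T B θ 1 s = 1 := by simp [iter, Gop, hs]
    calc (1 : ℝ) = iter T B θ 1 s := h1.symm
      _ ≤ yth T B θ s := le_ciSup (bdd_iter hT0 hT1 hθ0 hθ1 s) 1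
  · rw [if_neg hs]
    have hshift : yth T B θ s = ⨆ n, iter T B θ (n + 1) s := by
      refine le_antisymm (ciSup_le fun n => ?_) (ciSup_le fun n => ?_)
      · refine (iter_succ_le hT0 hT1 hθ0 n s).trans ?_
        exact le_ciSup (bddabove_of_le_one fun m => iter_le_one hT0 hT1 hθ0 hθ1 (m + 1) s) n
      · exact le_ciSup (bdd_iter hT0 hT1 hθ0 hθ1 s) (n + 1)
    have hstep : ∀ n : ℕ, iter T B θ (n + 1) s = θ * sup2 T (iter T B θ n) s := by
      intro n
      simp [iter, Gop, hs]
    rw [hshift]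
    simp only [hstep]
    rw [ciSup_const_mul hθ0
        (fun n m hnm => sup2_mono hT0 (fun s' => iter_mono_n hT0 hT1 hθ0 s' hnm) s)
        (fun n => sup2_le_one hT0 hT1 (iter_le_one hT0 hT1 hθ0 hθ1 n) s)]
    rw [ciSup_sup2 hT0 hT1 (fun s' => iter_mono_n hT0 hT1 hθ0 s')
        (fun n s' => iter_le_one hT0 hT1 hθ0 hθ1 n s') s]
    rfl

end

section
include hT0 hT1

lemma yth_le_ystar {θ : ℝ} (hθ0 : 0 ≤ θ) (hθ1 : θ ≤ 1) {ystar : S → ℝ}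
    (hy0 : ∀ s, 0 ≤ ystar s)
    (hy_fix : ∀ s, ystar s = if s ∈ B then 1 else sup2 T ystar s) (s : S) :
    yth T B θ s ≤ ystar s := by
  refine ciSup_le fun n => ?_
  induction n generalizing s with
  | zero => exact hy0 s
  | succ n ih =>
    show Gop T B θ (iter T B θ n) s ≤ ystar s
    rw [hy_fix s]
    unfold Gop
    by_cases hs : s ∈ B
    · rw [if_pos hs, if_pos hs]
    · rw [if_neg hs, if_neg hs]
      calc θ * sup2 T (iter T B θ n) s ≤ 1 * sup2 T (iter T B θ n) s :=
            mul_le_mul_of_nonneg_right hθ1 (sup2_nonneg hT0 (iter_nonneg hT0 hT1 hθ0 n) s)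
        _ = sup2 T (iter T B θ n) s := one_mul _
        _ ≤ sup2 T ystar s := sup2_mono hT0 (fun s' => ih s') s

end

end

end MDPAux

theorem exists_policy_attaining_max_reachability
    {S A : Type*} [Fintype S] [Nonempty S] [Fintype A] [Nonempty A]
    (T : S → A → S → ℝ)
    (hT0 : ∀ s a s', 0 ≤ T s a s')
    (hT1 : ∀ s a, ∑ s', T s a s' = 1)
    (B : Set S) [DecidablePred (· ∈ B)]
    (ystar : S → ℝ)
    (hy_mem : ∀ s, ystar s ∈ Set.Icc (0 : ℝ) 1)
    (hy_fix : ∀ s, ystar s =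
      if s ∈ B then 1
      else Finset.univ.sup' Finset.univ_nonempty fun a => ∑ s', T s a s' * ystar s')
    (hy_least : ∀ y : S → ℝ, (∀ s, y s ∈ Set.Icc (0 : ℝ) 1) →
      (∀ s, y s = if s ∈ B then 1
        else Finset.univ.sup' Finset.univ_nonempty fun a => ∑ s', T s a s' * y s') →
      ∀ s, ystar s ≤ y s) :
    ∃ π : S → A,
      (∀ s, ystar s = if s ∈ B then 1 else ∑ s', T s (π s) s' * ystar s') ∧
      (∀ x : S → ℝ, (∀ s, x s ∈ Set.Icc (0 : ℝ) 1) →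
        (∀ s, x s = if s ∈ B then 1 else ∑ s', T s (π s) s' * x s') →
        ∀ s, ystar s ≤ x s) := by
  classical
  open MDPAux in
  -- the fixed-point equation of `ystar`, phrased via `sup2`
  have hy_fix' : ∀ s, ystar s = if s ∈ B then 1 else MDPAux.sup2 T ystar s := hy_fix
  -- discount factors tending to 1
  set θk : ℕ → ℝ := fun k => 1 - 1 / (k + 1) with hθkdef
  have hpos : ∀ k : ℕ, 0 < (k : ℝ) + 1 := fun k => by positivity
  have hθk0 : ∀ k, 0 ≤ θk k := by
    intro k
    have h1 : (1 : ℝ) / (k + 1) ≤ 1 := by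
      rw [div_le_one (hpos k)]
      simp
    simp only [θk, sub_nonneg]
    exact h1
  have hθklt : ∀ k, θk k < 1 := by
    intro k
    have h1 : 0 < (1 : ℝ) / (k + 1) := by positivity
    simp only [θk]
    linarith
  have hθk1 : ∀ k, θk k ≤ 1 := fun k => (hθklt k).le
  have hθkmono : Monotone θk := by
    intro k m hkm
    have h1 : (1 : ℝ) / (m + 1) ≤ 1 / (k + 1) := by
      apply one_div_le_one_div_of_le (hpos k)
      have : (k : ℝ) ≤ m := by exact_mod_cast hkm
      linarith
    simp only [θk]
    linarith
  have hθktend : Filter.Tendsto θk Filter.atTop (nhds 1) := by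
    have h1 := tendsto_one_div_add_atTop_nhds_zero_nat (𝕜 := ℝ)
    have h2 := Filter.Tendsto.sub (tendsto_const_nhds (x := (1 : ℝ)) (f := Filter.atTop)) h1
    simpa [θk, one_div] using h2
  -- discounted values
  set yk : ℕ → S → ℝ := fun k => MDPAux.yth T B (θk k) with hykdef
  have hykfix : ∀ k s, yk k s = if s ∈ B then 1 else θk k * MDPAux.sup2 T (yk k) s :=
    fun k s => MDPAux.yth_fix hT0 hT1 (hθk0 k) (hθk1 k) s
  have hyk0 : ∀ k s, 0 ≤ yk k s := fun k s => MDPAux.yth_nonneg hT0 hT1 (hθk0 k) (hθk1 k) s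
  have hyk1 : ∀ k s, yk k s ≤ 1 := fun k s => MDPAux.yth_le_one hT0 hT1 (hθk0 k) (hθk1 k) s
  have hykmono : ∀ s, Monotone fun k => yk k s := fun s k m hkm =>
    MDPAux.yth_mono_theta hT0 hT1 (hθk0 k) (hθkmono hkm) (hθk1 m) s
  have hykystar : ∀ k s, yk k s ≤ ystar s := fun k s =>
    MDPAux.yth_le_ystar hT0 hT1 (hθk0 k) (hθk1 k) (fun s => (hy_mem s).1) hy_fix' s
  -- the limit value
  set yI : S → ℝ := fun s => ⨆ k, yk k s with hyIdef
  have hbdd : ∀ s, BddAbove (Set.range fun k => yk k s) := fun s =>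
    MDPAux.bddabove_of_le_one fun k => hyk1 k s
  have hyI0 : ∀ s, 0 ≤ yI s := fun s => (hyk0 0 s).trans (le_ciSup (hbdd s) 0)
  have hyI1 : ∀ s, yI s ≤ 1 := fun s => ciSup_le fun k => hyk1 k s
  have hyIystar : ∀ s, yI s ≤ ystar s := fun s => ciSup_le fun k => hykystar k s
  have hyIfix : ∀ s, yI s = if s ∈ B then 1 else MDPAux.sup2 T yI s := by
    intro s
    by_cases hs : s ∈ B
    · rw [if_pos hs]
      have h1 : ∀ k, yk k s = 1 := fun k => by rw [hykfix k s, if_pos hs]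
      simp only [hyIdef, h1]
      exact ciSup_const
    · rw [if_neg hs]
      have heq : ∀ k, yk k s = θk k * MDPAux.sup2 T (yk k) s := fun k => by
        rw [hykfix k s, if_neg hs]
      refine le_antisymm (ciSup_le fun k => ?_) (Finset.sup'_le _ _ fun a _ => ?_)
      · rw [heq k]
        have h1 : θk k * MDPAux.sup2 T (yk k) s ≤ MDPAux.sup2 T (yk k) s := by
          have h2 := MDPAux.sup2_nonneg hT0 (hyk0 k) s
          nlinarith [hθk1 k]
        exact h1.trans (MDPAux.sup2_mono hT0 (fun s' => le_ciSup (hbdd s') k) s)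
      · show MDPAux.qval T yI s a ≤ yI s
        have hq : MDPAux.qval T yI s a = ⨆ k, MDPAux.qval T (yk k) s a :=
          (MDPAux.ciSup_qval hT0 hT1 hykmono (fun k => hyk1 k) s a).symm
        rw [hq]
        refine ciSup_le fun k => ?_
        have htt : Filter.Tendsto (fun m => θk m * MDPAux.qval T (yk k) s a)
            Filter.atTop (nhds (1 * MDPAux.qval T (yk k) s a)) := hθktend.mul_const _
        rw [one_mul] at htt
        refine le_of_tendsto htt ?_
        filter_upwards [Filter.eventually_ge_atTop k] with m hm
        calc θk m * MDPAux.qval T (yk k) s a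
            ≤ θk m * MDPAux.qval T (yk m) s a :=
              mul_le_mul_of_nonneg_left
                (MDPAux.qval_mono hT0 (fun s' => hykmono s' hm) s a) (hθk0 m)
          _ ≤ θk m * MDPAux.sup2 T (yk m) s :=
              mul_le_mul_of_nonneg_left (Finset.le_sup' _ (Finset.mem_univ a)) (hθk0 m)
          _ = yk m s := (heq m).symm
          _ ≤ yI s := le_ciSup (hbdd s) m
  have hstarI : ∀ s, ystar s = yI s := fun s =>
    le_antisymm (hy_least yI (fun s => ⟨hyI0 s, hyI1 s⟩) hyIfix s) (hyIystar s)
  -- greedy policies for the discounted values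
  set pk : ℕ → S → A := fun k s =>
    (Finset.exists_mem_eq_sup' Finset.univ_nonempty (MDPAux.qval T (yk k) s)).choose
    with hpkdef
  have hpk : ∀ k s, MDPAux.sup2 T (yk k) s = MDPAux.qval T (yk k) s (pk k s) := fun k s =>
    (Finset.exists_mem_eq_sup' Finset.univ_nonempty (MDPAux.qval T (yk k) s)).choose_spec.2
  obtain ⟨π, hπinf⟩ := Finite.exists_infinite_fiber pk
  have hIinf : (pk ⁻¹' {π}).Infinite := Set.infinite_coe_iff.mp hπinf
  have hgt : ∀ k : ℕ, ∃ m, pk m = π ∧ k < m := by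
    intro k
    obtain ⟨m, hm, hkm⟩ := hIinf.exists_gt k
    exact ⟨m, by simpa using hm, hkm⟩
  refine ⟨π, ?_, ?_⟩
  · -- ystar is a fixed point of the chain operator of π
    intro s
    by_cases hs : s ∈ B
    · rw [if_pos hs]
      have h := hy_fix s
      rwa [if_pos hs] at h
    · rw [if_neg hs]
      refine le_antisymm ?_ ?_
      · show ystar s ≤ MDPAux.qval T ystar s (π s)
        rw [hstarI s]
        refine ciSup_le fun k => ?_
        obtain ⟨m, hm, hkm⟩ := hgt k
        have heqm : yk m s = θk m * MDPAux.qval T (yk m) s (π s) := by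
          rw [hykfix m s, if_neg hs, hpk m s, hm]
        calc yk k s ≤ yk m s := hykmono s hkm.le
          _ = θk m * MDPAux.qval T (yk m) s (π s) := heqm
          _ ≤ MDPAux.qval T (yk m) s (π s) := by
              have h2 := MDPAux.qval_nonneg hT0 (hyk0 m) s (π s)
              nlinarith [hθk1 m]
          _ ≤ MDPAux.qval T ystar s (π s) :=
              MDPAux.qval_mono hT0 (fun s' => hykystar m s') s (π s)
      · show MDPAux.qval T ystar s (π s) ≤ ystar s
        have h := hy_fix s
        rw [if_neg hs] at h
        rw [h]
        exact Finset.le_sup' (fun a => ∑ s', T s a s' * ystar s') (Finset.mem_univ (π s))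
  · -- ystar is below every fixed point of the chain operator of π
    intro x hx hxfix s
    have hkey : ∀ m, pk m = π → ∀ s, yk m s ≤ x s := by
      intro m hm
      by_contra hcon
      push_neg at hcon
      obtain ⟨s₀, hs₀⟩ := hcon
      obtain ⟨t, -, hmax⟩ :=
        Finset.exists_max_image Finset.univ (fun s => yk m s - x s) Finset.univ_nonempty
      have htpos : 0 < yk m t - x t := by
        have := hmax s₀ (Finset.mem_univ s₀)
        linarith
      by_cases ht : t ∈ B
      · have h1 : yk m t = 1 := by rw [hykfix m t, if_pos ht]
        have h2 := hxfix t
        rw [if_pos ht] at h2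
        linarith
      · have h1 : yk m t = θk m * MDPAux.qval T (yk m) t (π t) := by
          rw [hykfix m t, if_neg ht, hpk m t, hm]
        have h2 : x t = MDPAux.qval T x t (π t) := by
          have h := hxfix t
          rwa [if_neg ht] at h
        have h3 : MDPAux.qval T (yk m) t (π t) - MDPAux.qval T x t (π t) ≤ yk m t - x t := by
          have hsplit : MDPAux.qval T (yk m) t (π t) - MDPAux.qval T x t (π t)
              = ∑ s', T t (π t) s' * (yk m s' - x s') := by
            unfold MDPAux.qval
            rw [← Finset.sum_sub_distrib]
            exact Finset.sum_congr rfl fun s' _ => by ring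
          rw [hsplit]
          calc ∑ s', T t (π t) s' * (yk m s' - x s')
              ≤ ∑ s', T t (π t) s' * (yk m t - x t) :=
                Finset.sum_le_sum fun s' _ =>
                  mul_le_mul_of_nonneg_left (hmax s' (Finset.mem_univ s')) (hT0 t (π t) s')
            _ = (∑ s', T t (π t) s') * (yk m t - x t) := (Finset.sum_mul _ _ _).symm
            _ = yk m t - x t := by rw [hT1 t (π t), one_mul]
        have hx0 : 0 ≤ MDPAux.qval T x t (π t) :=
          MDPAux.qval_nonneg hT0 (fun s => (hx s).1) t (π t)
        nlinarith [mul_nonneg (hθk0 m) (sub_nonneg.2 h3),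
          mul_nonneg (sub_nonneg.2 (hθk1 m)) hx0,
          mul_pos (sub_pos.2 (hθklt m)) htpos]
    rw [hstarI s]
    refine ciSup_le fun k => ?_
    obtain ⟨m, hm, hkm⟩ := hgt k
    exact (hykmono s hkm.le).trans (hkey m hm s)
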